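/- Fix v > 1 and set U(v) := J2 · (2H)^{−1} · (2H−1)^{−1} · (1 − (v^{2H} − (v−1)^{2H})). Then there exist a natural number T3 and a constant D2 > 0 such that for all integers s > t > T3 with s/t > v one has C(s,t) ≤ D2 − U(v)·t^{2H} and D2 − U(v)·t^{2H} < 0. -/

import Mathlib

open Finset MeasureTheory ProbabilityTheory

/-- `Cst r s t` is the covariance `cov(S_s - S_t, S_t)` of the partial-sum process
of a centered stationary sequence with covariance function `r`. -/
noncomputable def Cst (r : ℤ → ℝ) (s t : ℕ) : ℝ :=
  ∑ i ∈ Finset.Icc (t + 1) s, ∑ j ∈ Finset.Icc 1 t, r ((i : ℤ) - (j : ℤ))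

private lemma aux_strictAnti {p : ℝ} (hp0 : 0 < p) (hp1 : p < 1) :
    StrictAntiOn (fun u : ℝ => (u + 1) ^ p - u ^ p) (Set.Ici (0:ℝ)) := by
  apply strictAntiOn_of_deriv_neg (convex_Ici 0)
  · apply ContinuousOn.sub
    · exact (continuousOn_id.add continuousOn_const).rpow_const fun x _ => Or.inr hp0.le
    · exact continuousOn_id.rpow_const fun x _ => Or.inr hp0.le
  · intro x hx
    rw [interior_Ici] at hx
    have hx0 : (0:ℝ) < x := hx
    have h1 : HasDerivAt (fun u : ℝ => (u + 1) ^ p - u ^ p)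
        (1 * p * (x + 1) ^ (p - 1) - 1 * p * x ^ (p - 1)) x :=
      (((hasDerivAt_id x).add_const 1).rpow_const
          (Or.inl (by nlinarith : (0:ℝ) < x + 1).ne')).sub
        ((hasDerivAt_id x).rpow_const (Or.inl hx0.ne'))
    rw [h1.deriv]
    have h2 : (x + 1) ^ (p - 1) < x ^ (p - 1) :=
      Real.rpow_lt_rpow_of_neg hx0 (lt_add_one x) (by linarith)
    nlinarith

private lemma aux_mono {q c : ℝ} (hq0 : q < 0) (hc : 0 ≤ c) :
    MonotoneOn (fun x : ℝ => x ^ q - (x - c) ^ q) (Set.Ioi c) := by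
  have hder : ∀ x ∈ Set.Ioi c, HasDerivAt (fun x : ℝ => x ^ q - (x - c) ^ q)
      (1 * q * x ^ (q - 1) - 1 * q * (x - c) ^ (q - 1)) x := by
    intro x hx
    have hxc : 0 < x - c := sub_pos.2 hx
    have hx0 : 0 < x := lt_of_le_of_lt hc hx
    exact ((hasDerivAt_id x).rpow_const (Or.inl hx0.ne')).sub
      (((hasDerivAt_id x).sub_const c).rpow_const (Or.inl hxc.ne'))
  apply monotoneOn_of_deriv_nonneg (convex_Ioi c)
  · apply ContinuousOn.sub
    · exact continuousOn_id.rpow_const fun x hx => Or.inl (lt_of_le_of_lt hc hx).ne'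
    · exact (continuousOn_id.sub continuousOn_const).rpow_const
        fun x hx => Or.inl (sub_pos.2 hx).ne'
  · intro x hx
    rw [interior_Ioi] at hx
    exact (hder x hx).differentiableAt.differentiableWithinAt
  · intro x hx
    rw [interior_Ioi] at hx
    rw [(hder x hx).deriv]
    have hxc : 0 < x - c := sub_pos.2 hx
    have h2 : x ^ (q - 1) ≤ (x - c) ^ (q - 1) :=
      Real.rpow_le_rpow_of_nonpos hxc (sub_le_self x hc) (by linarith)
    nlinarith

private lemma sum_rpow_lower {χ : ℝ} (hχ1 : (-2:ℝ) < χ) (hχ2 : χ < -1) (s t : ℕ)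
    (ht : 1 ≤ t) (hts : t < s) :
    (((s:ℝ)+1) ^ (χ+2) - ((t:ℝ)+1) ^ (χ+2) - ((s:ℝ)+1-(t:ℝ)) ^ (χ+2) + 1) / ((χ+1)*(χ+2))
      ≤ ∑ i ∈ Finset.Icc (t+1) s, ∑ j ∈ Finset.Icc 1 t, ((i:ℝ) - (j:ℝ)) ^ χ := by
  have htR : (1:ℝ) ≤ (t:ℝ) := by exact_mod_cast ht
  have hq0 : χ + 1 < 0 := by linarith
  have hq1 : (-1:ℝ) < χ + 1 := by linarith
  -- Step A : inner sum lower bound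
  have hinner : ∀ i ∈ Finset.Icc (t+1) s,
      ((i:ℝ) ^ (χ+1) - ((i:ℝ) - (t:ℝ)) ^ (χ+1)) / (χ+1)
        ≤ ∑ j ∈ Finset.Icc 1 t, ((i:ℝ) - (j:ℝ)) ^ χ := by
    intro i hi
    rw [Finset.mem_Icc] at hi
    have hit : (t:ℝ) + 1 ≤ (i:ℝ) := by exact_mod_cast hi.1
    have hmono : MonotoneOn (fun y : ℝ => ((i:ℝ) - y) ^ χ) (Set.Icc (0:ℝ) (0 + (t:ℕ))) := by
      intro y1 hy1 y2 hy2 hle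
      simp only [Set.mem_Icc, zero_add] at hy1 hy2
      have h2 : (0:ℝ) < (i:ℝ) - y2 := by linarith [hy2.2]
      exact Real.rpow_le_rpow_of_nonpos h2 (by linarith) (by linarith)
    have key := hmono.integral_le_sum
    have hInt : (∫ x in (0:ℝ)..((0:ℝ) + (t:ℕ)), ((i:ℝ) - x) ^ χ)
        = ((i:ℝ) ^ (χ+1) - ((i:ℝ) - (t:ℝ)) ^ (χ+1)) / (χ+1) := by
      rw [intervalIntegral.integral_comp_sub_left (fun u : ℝ => u ^ χ) (i:ℝ)]
      rw [show (i:ℝ) - ((0:ℝ) + (t:ℕ)) = (i:ℝ) - (t:ℝ) by push_cast; ring,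
        show (i:ℝ) - 0 = (i:ℝ) by ring]
      rw [integral_rpow (Or.inr ⟨by linarith, Set.notMem_uIcc_of_lt (by linarith) (by linarith)⟩)]
    have hSum : (∑ k ∈ Finset.range t, ((i:ℝ) - ((0:ℝ) + ((k+1:ℕ):ℝ))) ^ χ)
        = ∑ j ∈ Finset.Icc 1 t, ((i:ℝ) - (j:ℝ)) ^ χ := by
      rw [← Finset.Ico_add_one_right_eq_Icc, Finset.sum_Ico_eq_sum_range]
      refine Finset.sum_congr (by norm_num) fun k _ => ?_
      congr 1
      push_cast
      ring
    have key2 := key.trans_eq hSum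
    rwa [hInt] at key2
  -- Step B : antitone outer function
  have hAnti : AntitoneOn (fun x : ℝ => (x ^ (χ+1) - (x - (t:ℝ)) ^ (χ+1)) / (χ+1))
      (Set.Icc (((t+1:ℕ)):ℝ) (((s+1:ℕ)):ℝ)) := by
    have hg := aux_mono (q := χ+1) (c := (t:ℝ)) hq0 (by linarith)
    intro x hx y hy hxy
    simp only [Set.mem_Icc] at hx hy
    have hx' : x ∈ Set.Ioi (t:ℝ) := by
      have := hx.1; push_cast at this; exact Set.mem_Ioi.2 (by linarith)
    have hy' : y ∈ Set.Ioi (t:ℝ) := by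
      have := hy.1; push_cast at this; exact Set.mem_Ioi.2 (by linarith)
    have h3 := hg hx' hy' hxy
    have h4 := mul_le_mul_of_nonpos_right h3 (by
      simpa using inv_nonpos.2 hq0.le : (χ+1)⁻¹ ≤ 0)
    simpa [div_eq_mul_inv] using h4
  have hkey := hAnti.integral_le_sum_Ico (by omega : t+1 ≤ s+1)
  -- Step C : compute the integral
  have hsR : (t:ℝ) < (s:ℝ) := by exact_mod_cast hts
  have hne1 : (χ+1) ≠ 0 := by linarith
  have hne2 : (χ+2) ≠ 0 := by linarith
  have hi1 : IntervalIntegrable (fun x : ℝ => x ^ (χ+1)) volume (((t+1:ℕ)):ℝ) (((s+1:ℕ)):ℝ) :=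
    intervalIntegral.intervalIntegrable_rpow' hq1
  have hi2 : IntervalIntegrable (fun x : ℝ => (x - (t:ℝ)) ^ (χ+1)) volume
      (((t+1:ℕ)):ℝ) (((s+1:ℕ)):ℝ) := by
    apply ContinuousOn.intervalIntegrable
    apply ContinuousOn.rpow_const (continuousOn_id.sub continuousOn_const)
    intro x hx
    rw [Set.uIcc_of_le (by push_cast; linarith)] at hx
    have := hx.1
    push_cast at this
    exact Or.inl (by linarith : (0:ℝ) < x - (t:ℝ)).ne'
  have hI : (∫ x in (((t+1:ℕ)):ℝ)..(((s+1:ℕ)):ℝ),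
        (x ^ (χ+1) - (x - (t:ℝ)) ^ (χ+1)) / (χ+1))
      = (((s:ℝ)+1) ^ (χ+2) - ((t:ℝ)+1) ^ (χ+2) - ((s:ℝ)+1-(t:ℝ)) ^ (χ+2) + 1)
          / ((χ+1)*(χ+2)) := by
    rw [intervalIntegral.integral_div, intervalIntegral.integral_sub hi1 hi2,
      integral_rpow (Or.inl hq1),
      intervalIntegral.integral_comp_sub_right (fun u : ℝ => u ^ (χ+1)) (t:ℝ)]
    rw [integral_rpow (Or.inl hq1)]
    push_cast
    rw [show (t:ℝ) + 1 - (t:ℝ) = 1 by ring, Real.one_rpow,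
      show χ + 1 + 1 = χ + 2 by ring]
    field_simp
    ring
  have h3 : ∑ x ∈ Finset.Ico (t+1) (s+1),
      (((x:ℝ)) ^ (χ+1) - ((x:ℝ) - (t:ℝ)) ^ (χ+1)) / (χ+1)
        ≤ ∑ i ∈ Finset.Icc (t+1) s, ∑ j ∈ Finset.Icc 1 t, ((i:ℝ) - (j:ℝ)) ^ χ := by
    rw [Finset.Ico_add_one_right_eq_Icc]
    exact Finset.sum_le_sum hinner
  calc (((s:ℝ)+1) ^ (χ+2) - ((t:ℝ)+1) ^ (χ+2) - ((s:ℝ)+1-(t:ℝ)) ^ (χ+2) + 1) / ((χ+1)*(χ+2))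
      = ∫ x in (((t+1:ℕ)):ℝ)..(((s+1:ℕ)):ℝ),
          (x ^ (χ+1) - (x - (t:ℝ)) ^ (χ+1)) / (χ+1) := hI.symm
    _ ≤ ∑ x ∈ Finset.Ico (t+1) (s+1),
          (((x:ℝ)) ^ (χ+1) - ((x:ℝ) - (t:ℝ)) ^ (χ+1)) / (χ+1) := hkey
    _ ≤ _ := h3

private lemma bad_card (T0 t s : ℕ) :
    (((Finset.Icc (t+1) s) ×ˢ (Finset.Icc 1 t)).filter
      (fun p : ℕ × ℕ => (p.1:ℤ) - (p.2:ℤ) < (T0:ℤ))).card ≤ T0 * T0 := by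
  have h : (((Finset.Icc (t+1) s) ×ˢ (Finset.Icc 1 t)).filter
      (fun p : ℕ × ℕ => (p.1:ℤ) - (p.2:ℤ) < (T0:ℤ))).card
      ≤ (Finset.range T0 ×ˢ Finset.range T0).card := by
    apply Finset.card_le_card_of_injOn (fun p : ℕ × ℕ => (p.1 - t, p.1 - p.2))
    · rintro ⟨a, b⟩ hp
      simp only [Finset.mem_coe, Finset.mem_filter, Finset.mem_product, Finset.mem_Icc] at hp
      simp only [Finset.mem_coe, Finset.mem_product, Finset.mem_range]
      omega
    · rintro ⟨a, b⟩ hp ⟨c, d⟩ hq hpq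
      simp only [Finset.coe_filter, Finset.mem_product, Finset.mem_Icc, Set.mem_setOf_eq,
        Finset.mem_coe] at hp hq
      simp only [Prod.mk.injEq] at hpq ⊢
      omega
  simpa using h

set_option maxHeartbeats 1000000 in
theorem covariance_negative_bound
    (r : ℤ → ℝ) (hEven : ∀ t : ℤ, r (-t) = r t)
    (hAbsSum : Summable fun t : ℤ => |r t|)
    (hSumZero : ∑' t : ℤ, r t = 0)
    (T0 : ℕ) (hT0 : 2 ≤ T0)
    (J1 J2 χ : ℝ) (hJ12 : J1 ≤ J2) (hJ2 : J2 < 0)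
    (hχ : χ ∈ Set.Ioo (-2 : ℝ) (-1))
    (hbound : ∀ t : ℤ, (T0 : ℤ) ≤ t →
      J1 * (t : ℝ) ^ χ ≤ r t ∧ r t ≤ J2 * (t : ℝ) ^ χ)
    (H : ℝ) (hH : H = χ / 2 + 1)
    (v : ℝ) (hv : 1 < v) :
    ∃ (T3 : ℕ) (D2 : ℝ), 0 < D2 ∧
      ∀ s t : ℕ, T3 < t → t < s → v < (s : ℝ) / (t : ℝ) →
        Cst r s t ≤ D2 - (J2 * (2 * H)⁻¹ * (2 * H - 1)⁻¹ * (1 - (v ^ (2 * H) - (v - 1) ^ (2 * H)))) * (t : ℝ) ^ (2 * H) ∧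
        D2 - (J2 * (2 * H)⁻¹ * (2 * H - 1)⁻¹ * (1 - (v ^ (2 * H) - (v - 1) ^ (2 * H)))) * (t : ℝ) ^ (2 * H) < 0 := by
  obtain ⟨hχ1, hχ2⟩ := hχ
  have hq0 : χ + 1 < 0 := by linarith
  have hq1 : (-1:ℝ) < χ + 1 := by linarith
  have hp0 : (0:ℝ) < χ + 2 := by linarith
  have hp1 : χ + 2 < 1 := by linarith
  have h2H : 2 * H = χ + 2 := by rw [hH]; ring
  have hv0 : (0:ℝ) < v - 1 := by linarith
  set ψ : ℝ := v ^ (χ+2) - (v-1) ^ (χ+2) with hψ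
  have hψ1 : ψ < 1 := by
    have h := aux_strictAnti hp0 hp1 Set.self_mem_Ici (Set.mem_Ici.2 hv0.le) hv0
    simpa [hψ, Real.zero_rpow hp0.ne', show v - 1 + 1 = v by ring] using h
  set M : ℝ := ∑' k : ℤ, |r k| with hM
  have hM0 : 0 ≤ M := tsum_nonneg fun _ => abs_nonneg _
  have hMk : ∀ k : ℤ, |r k| ≤ M := fun k => Summable.le_tsum hAbsSum k fun _ _ => abs_nonneg _
  set c0 : ℝ := M + |J2| with hc0
  have hc00 : 0 ≤ c0 := by positivity
  set N : ℝ := -((χ+1) * (χ+2)) with hN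
  have hN0 : 0 < N := by nlinarith
  set U : ℝ := -J2 * (1 - ψ) / N with hUdef
  have hU0 : 0 < U := div_pos (by nlinarith) hN0
  set D2 : ℝ := (T0:ℝ) * (T0:ℝ) * c0 - J2 / N + 1 with hD2
  have hJN : J2 / N < 0 := div_neg_of_neg_of_pos hJ2 hN0
  have hD20 : 0 < D2 := by
    have h1 : (0:ℝ) ≤ (T0:ℝ) * (T0:ℝ) * c0 := by positivity
    rw [hD2]; linarith
  refine ⟨⌈(D2 / U) ^ (χ+2)⁻¹⌉₊, D2, hD20, ?_⟩
  intro s t hT3 hts hvst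
  have ht1 : 1 ≤ t := by omega
  have htR : (1:ℝ) ≤ (t:ℝ) := by exact_mod_cast ht1
  have ht0 : (0:ℝ) < (t:ℝ) := by linarith
  have hsR : (t:ℝ) < (s:ℝ) := by exact_mod_cast hts
  have hUg : J2 * (2 * H)⁻¹ * (2 * H - 1)⁻¹ * (1 - (v ^ (2*H) - (v - 1) ^ (2*H))) = U := by
    rw [h2H, show (χ + 2) - 1 = χ + 1 by ring, hUdef, hN, ← hψ]
    field_simp
  rw [hUg, h2H]
  -- second conjunct
  have hxle := Nat.le_ceil ((D2 / U) ^ (χ+2)⁻¹)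
  have hceil : ((⌈(D2 / U) ^ (χ+2)⁻¹⌉₊ : ℕ) : ℝ) < (t:ℝ) := by exact_mod_cast hT3
  have hxt : (D2 / U) ^ (χ+2)⁻¹ < (t:ℝ) := lt_of_le_of_lt hxle hceil
  have h0x : 0 ≤ (D2 / U) ^ (χ+2)⁻¹ := Real.rpow_nonneg (div_nonneg hD20.le hU0.le) _
  have ht2 : D2 / U < (t:ℝ) ^ (χ+2) := by
    have h := Real.rpow_lt_rpow h0x hxt hp0
    rwa [Real.rpow_inv_rpow (div_nonneg hD20.le hU0.le) hp0.ne'] at h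
  have hsecond : D2 - U * (t:ℝ) ^ (χ+2) < 0 := by
    have h := (div_lt_iff₀ hU0).1 ht2
    have h2 : (t:ℝ) ^ (χ+2) * U = U * (t:ℝ) ^ (χ+2) := mul_comm _ _
    linarith
  refine ⟨?_, hsecond⟩
  -- first conjunct
  set A := Finset.Icc (t+1) s ×ˢ Finset.Icc 1 t with hA
  set S : ℝ := ∑ i ∈ Finset.Icc (t+1) s, ∑ j ∈ Finset.Icc 1 t, ((i:ℝ) - (j:ℝ)) ^ χ with hS
  have hpt : ∀ p ∈ A, r ((p.1:ℤ) - (p.2:ℤ)) ≤ J2 * ((p.1:ℝ) - (p.2:ℝ)) ^ χ +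
      (if (p.1:ℤ) - (p.2:ℤ) < (T0:ℤ) then c0 else 0) := by
    rintro ⟨i, j⟩ hp
    simp only [hA, Finset.mem_product, Finset.mem_Icc] at hp
    have hij1 : (1:ℤ) ≤ (i:ℤ) - (j:ℤ) := by omega
    have hijR : (1:ℝ) ≤ (i:ℝ) - (j:ℝ) := by
      have : ((1:ℤ):ℝ) ≤ (((i:ℤ) - (j:ℤ) : ℤ):ℝ) := by exact_mod_cast hij1
      push_cast at this; linarith
    by_cases hcase : (i:ℤ) - (j:ℤ) < (T0:ℤ)
    · rw [if_pos hcase]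
      have h1 : r ((i:ℤ) - (j:ℤ)) ≤ M := (le_abs_self _).trans (hMk _)
      have h3 : ((i:ℝ) - (j:ℝ)) ^ χ ≤ 1 :=
        Real.rpow_le_one_of_one_le_of_nonpos hijR (by linarith)
      have h4 : J2 * 1 ≤ J2 * ((i:ℝ) - (j:ℝ)) ^ χ :=
        mul_le_mul_of_nonpos_left h3 hJ2.le
      have h5 : |J2| = -J2 := abs_of_neg hJ2
      rw [hc0]
      linarith
    · rw [if_neg hcase]
      push_neg at hcase
      have h := (hbound _ hcase).2
      calc r ((i:ℤ) - (j:ℤ)) ≤ J2 * ((((i:ℤ) - (j:ℤ) : ℤ)):ℝ) ^ χ := h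
        _ = J2 * ((i:ℝ) - (j:ℝ)) ^ χ + 0 := by push_cast; ring
  have hstep1 : Cst r s t ≤ (T0:ℝ) * (T0:ℝ) * c0 + J2 * S := by
    have hprod : Cst r s t = ∑ p ∈ A, r ((p.1:ℤ) - (p.2:ℤ)) := by
      rw [Cst, hA, Finset.sum_product]
    have hprodS : (∑ p ∈ A, J2 * ((p.1:ℝ) - (p.2:ℝ)) ^ χ) = J2 * S := by
      rw [hS, ← Finset.mul_sum, hA, Finset.sum_product]
    have hbadsum : (∑ p ∈ A, (if (p.1:ℤ) - (p.2:ℤ) < (T0:ℤ) then c0 else 0))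
        ≤ (T0:ℝ) * (T0:ℝ) * c0 := by
      rw [← Finset.sum_filter, Finset.sum_const, nsmul_eq_mul]
      have hcard := bad_card T0 t s
      calc ((A.filter (fun p : ℕ × ℕ => (p.1:ℤ) - (p.2:ℤ) < (T0:ℤ))).card : ℝ) * c0
          ≤ ((T0 * T0 : ℕ) : ℝ) * c0 := by
            apply mul_le_mul_of_nonneg_right _ hc00
            exact_mod_cast hcard
        _ = (T0:ℝ) * (T0:ℝ) * c0 := by push_cast; ring
    calc Cst r s t = ∑ p ∈ A, r ((p.1:ℤ) - (p.2:ℤ)) := hprod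
      _ ≤ ∑ p ∈ A, (J2 * ((p.1:ℝ) - (p.2:ℝ)) ^ χ +
            (if (p.1:ℤ) - (p.2:ℤ) < (T0:ℤ) then c0 else 0)) := Finset.sum_le_sum hpt
      _ = J2 * S + ∑ p ∈ A, (if (p.1:ℤ) - (p.2:ℤ) < (T0:ℤ) then c0 else 0) := by
          rw [Finset.sum_add_distrib, hprodS]
      _ ≤ (T0:ℝ) * (T0:ℝ) * c0 + J2 * S := by linarith
  -- step 2
  set E : ℝ := (((s:ℝ)+1) ^ (χ+2) - ((t:ℝ)+1) ^ (χ+2) - ((s:ℝ)+1-(t:ℝ)) ^ (χ+2) + 1)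
      / ((χ+1)*(χ+2)) with hE
  have hstep2 : E ≤ S := sum_rpow_lower hχ1 hχ2 s t ht1 hts
  have hJ2S : J2 * S ≤ J2 * E := mul_le_mul_of_nonpos_left hstep2 hJ2.le
  -- step 3
  have hEeq : E = (((t:ℝ)+1) ^ (χ+2) + ((s:ℝ)+1-(t:ℝ)) ^ (χ+2) - ((s:ℝ)+1) ^ (χ+2) - 1) / N := by
    rw [hE, hN, div_neg, ← neg_div]
    congr 1
    ring
  have hscale : ((s:ℝ)+1) ^ (χ+2) - ((s:ℝ)+1-(t:ℝ)) ^ (χ+2) ≤ (t:ℝ) ^ (χ+2) * ψ := by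
    set a : ℝ := ((s:ℝ)+1)/(t:ℝ) with ha
    have hvs : v * (t:ℝ) < (s:ℝ) := (lt_div_iff₀ ht0).1 hvst
    have hav : v < a := by rw [ha, lt_div_iff₀ ht0]; linarith
    have has : (s:ℝ)+1 = (t:ℝ) * a := by rw [ha]; field_simp
    have hast : (s:ℝ)+1-(t:ℝ) = (t:ℝ) * (a - 1) := by rw [ha]; field_simp
    rw [hast, has, Real.mul_rpow ht0.le (by linarith : (0:ℝ) ≤ a - 1),
      Real.mul_rpow ht0.le (by linarith : (0:ℝ) ≤ a)]
    have h5 : a ^ (χ+2) - (a-1) ^ (χ+2) ≤ ψ := by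
      have h6 := (aux_strictAnti hp0 hp1).antitoneOn (Set.mem_Ici.2 hv0.le)
        (Set.mem_Ici.2 (by linarith : (0:ℝ) ≤ a - 1)) (by linarith : v - 1 ≤ a - 1)
      simpa [hψ, show a - 1 + 1 = a by ring, show v - 1 + 1 = v by ring] using h6
    have h8 := mul_le_mul_of_nonneg_left h5 (Real.rpow_nonneg ht0.le (χ+2))
    rw [mul_sub] at h8
    linarith [h8]
  have htp1 : (t:ℝ) ^ (χ+2) ≤ ((t:ℝ)+1) ^ (χ+2) :=
    Real.rpow_le_rpow (by linarith) (by linarith) hp0.le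
  have hElow : ((t:ℝ) ^ (χ+2) * (1 - ψ) - 1) / N ≤ E := by
    rw [hEeq]
    exact (div_le_div_iff_of_pos_right hN0).2 (by linarith)
  have hfinal1 : J2 * E ≤ J2 * (((t:ℝ) ^ (χ+2) * (1 - ψ) - 1) / N) :=
    mul_le_mul_of_nonpos_left hElow hJ2.le
  have hArith : J2 * (((t:ℝ) ^ (χ+2) * (1 - ψ) - 1) / N)
      = -(U * (t:ℝ) ^ (χ+2)) - J2 / N := by
    rw [hUdef]
    field_simp
  rw [hD2]
  linarith [hstep1, hJ2S, hfinal1]
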